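/- Let 𝒢 be a finite set of pairwise commuting invertible diagonal T × T complex matrices with |𝒢| = Γ, let η ∈ ℤ⁺, Ξ ∈ ℂ^T, and let U be the matrix with columns ∏_{G∈𝒢} G^{α_G} Ξ over α ∈ [η]^Γ and W the matrix with columns over α ∈ [η+1]^Γ. Then for every G₀ ∈ 𝒢, the column span of G₀·U is contained in the column span of W. -/

import Mathlib

theorem stmt_12 (T Γ η : ℕ) (hΓ : 0 < Γ) (hη : 0 < η)
    (G : Fin Γ → Matrix (Fin T) (Fin T) ℂ)
    (hinj : Function.Injective G)
    (hcomm : ∀ g g', Commute (G g) (G g'))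
    (hdiag : ∀ g, (G g).IsDiag)
    (hunit : ∀ g, IsUnit (G g))
    (Ξ : Fin T → ℂ) (g₀ : Fin Γ) :
    Submodule.span ℂ
        (Set.range fun α : Fin Γ → Fin η =>
          (G g₀).mulVec ((List.ofFn fun g => G g ^ ((α g : ℕ) + 1)).prod.mulVec Ξ)) ≤
      Submodule.span ℂ
        (Set.range fun α : Fin Γ → Fin (η + 1) =>
          (List.ofFn fun g => G g ^ ((α g : ℕ) + 1)).prod.mulVec Ξ) := by
  rw [Submodule.span_le]
  rintro _ ⟨α, rfl⟩
  apply Submodule.subset_span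
  refine ⟨fun g => if g = g₀ then (α g).succ else (α g).castSucc, ?_⟩
  set d : Fin Γ → Fin T → ℂ := fun g => (G g).diag with hd
  have hG : ∀ g, G g = Matrix.diagonal (d g) := fun g => ((hdiag g).diagonal_diag).symm
  have key : ∀ (e : Fin Γ → ℕ),
      (List.ofFn fun g => G g ^ e g).prod =
        Matrix.diagonal (∏ g, d g ^ e g) := by
    intro e
    have : (List.ofFn fun g => G g ^ e g) =
        (List.ofFn fun g => d g ^ e g).map (Matrix.diagonalRingHom (Fin T) ℂ) := by
      rw [List.map_ofFn]
      congr 1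
      funext g
      simp [Function.comp, hG g, Matrix.diagonalRingHom, ← Matrix.diagonal_pow]
      rfl
    rw [this, ← map_list_prod, List.prod_ofFn]
    rfl
  simp only [key]
  rw [hG g₀, Matrix.mulVec_mulVec, Matrix.diagonal_mul_diagonal]
  congr 1
  have hv : ∀ x : Fin Γ, ((if x = g₀ then (α x).succ else (α x).castSucc : Fin (η + 1)) : ℕ) + 1
      = ((α x : ℕ) + 1) + (if x = g₀ then 1 else 0) := by
    intro x
    split <;> simp
  simp only [hv, pow_add]
  rw [Finset.prod_mul_distrib]
  have h2 : (∏ x : Fin Γ, d x ^ (if x = g₀ then 1 else 0)) = d g₀ := by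
    simp [pow_ite, Finset.prod_ite_eq']
  rw [h2, mul_comm]
  rfl
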